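/- Let ξ be a positive random variable whose distribution is log-concave of order p for some real p > 1, i.e., ξ has density f(x) = x^{p−1}·g(x) on (0,∞) with g log-concave on (0,∞). Then for every α with 0 ≤ α ≤ p−1, E[ exp( α·|log ξ − E[log ξ]| ) ] ≤ 2·e^{2α²/(p−1)}. -/

import Mathlib

open MeasureTheory ProbabilityTheory Set Pointwise
open scoped ENNReal

lemma sumset_vol (K L : Set ℝ) (hK : IsCompact K) (hL : IsCompact L)
    (hKne : K.Nonempty) (hLne : L.Nonempty) :
    volume K + volume L ≤ volume (K + L) := by
  obtain ⟨a, haK, ha⟩ := hK.exists_isGreatest hKne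
  obtain ⟨b, hbL, hb⟩ := hL.exists_isLeast hLne
  set U : Set ℝ := a +ᵥ L with hU
  set V : Set ℝ := b +ᵥ K with hV
  have hUsub : U ⊆ K + L := by
    rintro x ⟨l, hl, rfl⟩
    exact Set.add_mem_add haK hl
  have hVsub : V ⊆ K + L := by
    rintro x ⟨k, hk, rfl⟩
    show b + k ∈ K + L
    rw [add_comm b k]
    exact Set.add_mem_add hk hbL
  have hIsub : U ∩ V ⊆ {a + b} := by
    rintro x ⟨⟨l, hl, rfl⟩, ⟨k, hk, hx⟩⟩
    have hbl := hb hl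
    have hak := ha hk
    simp only [vadd_eq_add] at hx ⊢
    simp only [mem_singleton_iff]
    linarith
  have hUm : MeasurableSet U := ((hL.vadd a).isClosed.measurableSet)
  have key : volume (V ∪ U) + volume (V ∩ U) = volume V + volume U :=
    measure_union_add_inter V hUm
  have hvolU : volume U = volume L := measure_vadd (μ := volume) a L
  have hvolV : volume V = volume K := measure_vadd (μ := volume) b K
  have h1 : volume (V ∪ U) ≤ volume (K + L) := measure_mono (union_subset hVsub hUsub)
  have h2 : volume (V ∩ U) = 0 := by
    refine measure_mono_null ?_ (measure_singleton (a + b))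
    rw [Set.inter_comm]; exact hIsub
  calc volume K + volume L = volume V + volume U := by rw [hvolU, hvolV]
    _ = volume (V ∪ U) + volume (V ∩ U) := key.symm
    _ ≤ volume (K + L) + 0 := by gcongr; exact le_of_eq h2
    _ = volume (K + L) := add_zero _

lemma midpoint_vol (A B C : Set ℝ) (hA : MeasurableSet A) (hB : MeasurableSet B)
    (hAne : A.Nonempty) (hBne : B.Nonempty)
    (hmid : ∀ x ∈ A, ∀ y ∈ B, (x + y) / 2 ∈ C) :
    volume A + volume B ≤ 2 * volume C := by
  obtain ⟨x₀, hx₀⟩ := hAne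
  obtain ⟨y₀, hy₀⟩ := hBne
  have key : ∀ K ⊆ A, IsCompact K → K.Nonempty → ∀ L ⊆ B, IsCompact L → L.Nonempty →
      volume K + volume L ≤ 2 * volume C := by
    intro K hKA hK hKne L hLB hL hLne
    have hsub : (2⁻¹ : ℝ) • (K + L) ⊆ C := by
      rintro z ⟨w, ⟨k, hk, l, hl, rfl⟩, rfl⟩
      have := hmid k (hKA hk) l (hLB hl)
      show (2⁻¹ : ℝ) • (k + l) ∈ C
      have heq : (2⁻¹ : ℝ) • (k + l) = (k + l) / 2 := by
        simp [smul_eq_mul]; ring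
      rwa [heq]
    have hsmul : volume ((2⁻¹ : ℝ) • (K + L)) = 2⁻¹ * volume (K + L) := by
      have h := Measure.addHaar_smul (volume : Measure ℝ) (2⁻¹ : ℝ) (K + L)
      rw [h]
      congr 1
      rw [Module.finrank_self, pow_one, abs_of_pos (by norm_num : (0:ℝ) < 2⁻¹),
        ENNReal.ofReal_inv_of_pos (by norm_num : (0:ℝ) < 2)]
      norm_num
    have h1 : volume K + volume L ≤ volume (K + L) := sumset_vol K L hK hL hKne hLne
    have h2 : volume (K + L) = 2 * volume ((2⁻¹ : ℝ) • (K + L)) := by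
      rw [hsmul, ← mul_assoc, ENNReal.mul_inv_cancel (by norm_num) (by norm_num), one_mul]
    calc volume K + volume L ≤ volume (K + L) := h1
      _ = 2 * volume ((2⁻¹ : ℝ) • (K + L)) := h2
      _ ≤ 2 * volume C := mul_le_mul_right (measure_mono hsub) 2
  have key2 : ∀ K, (K ⊆ A ∧ IsCompact K) → ∀ L, (L ⊆ B ∧ IsCompact L) →
      volume K + volume L ≤ 2 * volume C := by
    rintro K ⟨hKA, hK⟩ L ⟨hLB, hL⟩
    have h1 : volume K ≤ volume (K ∪ {x₀}) := measure_mono subset_union_left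
    have h2 : volume L ≤ volume (L ∪ {y₀}) := measure_mono subset_union_left
    calc volume K + volume L ≤ volume (K ∪ {x₀}) + volume (L ∪ {y₀}) := add_le_add h1 h2
      _ ≤ 2 * volume C := key _ (union_subset hKA (by simpa using hx₀))
          (hK.union isCompact_singleton) ⟨x₀, Or.inr rfl⟩ _
          (union_subset hLB (by simpa using hy₀)) (hL.union isCompact_singleton)
          ⟨y₀, Or.inr rfl⟩
  rw [hA.measure_eq_iSup_isCompact, hB.measure_eq_iSup_isCompact]
  simp_rw [iSup_and']
  exact ENNReal.biSup_add_biSup_le' ⟨∅, empty_subset _, isCompact_empty⟩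
    ⟨∅, empty_subset _, isCompact_empty⟩ key2

lemma ennreal_four_mul_le_sq_add (a b : ℝ≥0∞) : 4 * a * b ≤ (a + b) ^ 2 := by
  have key : ∀ x y : ℝ≥0∞, x ≤ y → 2 * (x * y) ≤ x ^ 2 + y ^ 2 := by
    intro x y hxy
    obtain ⟨d, rfl⟩ : ∃ d, y = x + d := ⟨y - x, (add_tsub_cancel_of_le hxy).symm⟩
    calc 2 * (x * (x + d)) = x ^ 2 + (x ^ 2 + 2 * x * d) := by ring
      _ ≤ x ^ 2 + ((x ^ 2 + 2 * x * d) + d ^ 2) :=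
          add_le_add_right (le_add_of_nonneg_right zero_le) _
      _ = x ^ 2 + (x + d) ^ 2 := by ring
  have main : 2 * (a * b) ≤ a ^ 2 + b ^ 2 := by
    rcases le_total a b with hab | hab
    · exact key a b hab
    · rw [mul_comm a b, add_comm (a ^ 2)]; exact key b a hab
  calc 4 * a * b = 2 * (a * b) + 2 * (a * b) := by ring
    _ ≤ (a ^ 2 + b ^ 2) + 2 * (a * b) := by gcongr
    _ = (a + b) ^ 2 := by ring

lemma PL_normalized (f g h : ℝ → ℝ)
    (hmf : Measurable f) (hmg : Measurable g) (hmh : Measurable h)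
    (hf0 : ∀ x, 0 ≤ f x) (hg0 : ∀ x, 0 ≤ g x) (hh0 : ∀ x, 0 ≤ h x)
    (hf1 : ∀ x, f x ≤ 1) (hg1 : ∀ x, g x ≤ 1)
    (hfs : ∀ t : ℝ, 0 < t → t < 1 → ∃ x, t < f x)
    (hgs : ∀ t : ℝ, 0 < t → t < 1 → ∃ x, t < g x)
    (hyp : ∀ x y, f x * g y ≤ (h ((x + y) / 2)) ^ 2) :
    (∫⁻ x, ENNReal.ofReal (f x)) * ∫⁻ x, ENNReal.ofReal (g x) ≤ (∫⁻ x, ENNReal.ofReal (h x)) ^ 2 := by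
  have layerf := lintegral_eq_lintegral_meas_lt volume (ae_of_all _ hf0) hmf.aemeasurable
  have layerg := lintegral_eq_lintegral_meas_lt volume (ae_of_all _ hg0) hmg.aemeasurable
  have layerh := lintegral_eq_lintegral_meas_lt volume (ae_of_all _ hh0) hmh.aemeasurable
  have level : ∀ t ∈ Ioi (0:ℝ),
      volume {x | t < f x} + volume {x | t < g x} ≤ 2 * volume {x | t < h x} := by
    intro t ht
    simp only [mem_Ioi] at ht
    rcases lt_or_ge t 1 with ht1 | ht1
    · obtain ⟨xf, hxf⟩ := hfs t ht ht1
      obtain ⟨xg, hxg⟩ := hgs t ht ht1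
      refine midpoint_vol _ _ _ (measurableSet_lt measurable_const hmf)
        (measurableSet_lt measurable_const hmg) ⟨xf, hxf⟩ ⟨xg, hxg⟩ ?_
      intro x hx y hy
      simp only [mem_setOf_eq] at hx hy ⊢
      by_contra hc
      push_neg at hc
      have h1 : (h ((x + y) / 2)) ^ 2 ≤ t ^ 2 := by
        apply pow_le_pow_left₀ (hh0 _) hc 2
      have h2 : t ^ 2 < f x * g y := by
        calc t ^ 2 = t * t := sq t
          _ < f x * g y := by
            apply mul_lt_mul'' hx hy ht.le ht.le
      exact absurd (hyp x y) (by linarith)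
    · have hf_empty : {x | t < f x} = ∅ := by
        ext x; simp only [mem_setOf_eq, mem_empty_iff_false, iff_false, not_lt]
        exact (hf1 x).trans ht1
      have hg_empty : {x | t < g x} = ∅ := by
        ext x; simp only [mem_setOf_eq, mem_empty_iff_false, iff_false, not_lt]
        exact (hg1 x).trans ht1
      simp [hf_empty, hg_empty]
  have meas_f : Measurable fun t : ℝ => volume {x | t < f x} := by
    apply Antitone.measurable
    intro t₁ t₂ h12
    exact measure_mono fun x hx => lt_of_le_of_lt h12 hx
  have meas_g : Measurable fun t : ℝ => volume {x | t < g x} := by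
    apply Antitone.measurable
    intro t₁ t₂ h12
    exact measure_mono fun x hx => lt_of_le_of_lt h12 hx
  have meas_h : Measurable fun t : ℝ => volume {x | t < h x} := by
    apply Antitone.measurable
    intro t₁ t₂ h12
    exact measure_mono fun x hx => lt_of_le_of_lt h12 hx
  have sum_le : (∫⁻ x, ENNReal.ofReal (f x)) + ∫⁻ x, ENNReal.ofReal (g x)
      ≤ 2 * ∫⁻ x, ENNReal.ofReal (h x) := by
    rw [layerf, layerg, layerh, ← lintegral_add_left meas_f, ← lintegral_const_mul 2 meas_h]
    exact setLIntegral_mono (by fun_prop) level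
  calc (∫⁻ x, ENNReal.ofReal (f x)) * ∫⁻ x, ENNReal.ofReal (g x)
      ≤ (4 : ℝ≥0∞)⁻¹ * (4 * (∫⁻ x, ENNReal.ofReal (f x)) * ∫⁻ x, ENNReal.ofReal (g x)) := by
        rw [mul_assoc, ← mul_assoc (4 : ℝ≥0∞)⁻¹, ENNReal.inv_mul_cancel (by norm_num) (by norm_num), one_mul]
    _ ≤ (4 : ℝ≥0∞)⁻¹ * (((∫⁻ x, ENNReal.ofReal (f x)) + ∫⁻ x, ENNReal.ofReal (g x)) ^ 2) :=
        mul_le_mul_right (ennreal_four_mul_le_sq_add _ _) _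
    _ ≤ (4 : ℝ≥0∞)⁻¹ * ((2 * ∫⁻ x, ENNReal.ofReal (h x)) ^ 2) :=
        mul_le_mul_right (pow_le_pow_left' sum_le 2) _
    _ = (∫⁻ x, ENNReal.ofReal (h x)) ^ 2 := by
        rw [mul_pow, ← mul_assoc]
        norm_num
        rw [show ((4:ℝ≥0∞)⁻¹ * 4) = 1 from ENNReal.inv_mul_cancel (by norm_num) (by norm_num),
          one_mul]

lemma PL_bounded (f g h : ℝ → ℝ) (n m : ℝ)
    (hmf : Measurable f) (hmg : Measurable g) (hmh : Measurable h)
    (hf0 : ∀ x, 0 ≤ f x) (hg0 : ∀ x, 0 ≤ g x) (hh0 : ∀ x, 0 ≤ h x)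
    (hfb : ∀ x, f x ≤ n) (hgb : ∀ x, g x ≤ m)
    (hyp : ∀ x y, f x * g y ≤ (h ((x + y) / 2)) ^ 2) :
    (∫⁻ x, ENNReal.ofReal (f x)) * ∫⁻ x, ENNReal.ofReal (g x) ≤ (∫⁻ x, ENNReal.ofReal (h x)) ^ 2 := by
  have bddf : BddAbove (range f) := ⟨n, by rintro y ⟨x, rfl⟩; exact hfb x⟩
  have bddg : BddAbove (range g) := ⟨m, by rintro y ⟨x, rfl⟩; exact hgb x⟩
  set sf := ⨆ x, f x with hsf_def
  set sg := ⨆ x, g x with hsg_def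
  by_cases hsf : 0 < sf
  swap
  · have hz : ∀ x, f x = 0 := fun x =>
      le_antisymm ((le_ciSup bddf x).trans (not_lt.mp hsf)) (hf0 x)
    simp only [hz, ENNReal.ofReal_zero, lintegral_zero, zero_mul]
    exact zero_le
  by_cases hsg : 0 < sg
  swap
  · have hz : ∀ x, g x = 0 := fun x =>
      le_antisymm ((le_ciSup bddg x).trans (not_lt.mp hsg)) (hg0 x)
    simp only [hz, ENNReal.ofReal_zero, lintegral_zero, mul_zero]
    exact zero_le
  set c := Real.sqrt (sf * sg) with hc_def
  have hc : 0 < c := Real.sqrt_pos.mpr (mul_pos hsf hsg)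
  have hc2 : c ^ 2 = sf * sg := Real.sq_sqrt (mul_pos hsf hsg).le
  have key := PL_normalized (fun x => f x / sf) (fun x => g x / sg) (fun x => h x / c)
    (hmf.div_const sf) (hmg.div_const sg) (hmh.div_const c)
    (fun x => div_nonneg (hf0 x) hsf.le) (fun x => div_nonneg (hg0 x) hsg.le)
    (fun x => div_nonneg (hh0 x) hc.le)
    (fun x => (div_le_one hsf).mpr (le_ciSup bddf x))
    (fun x => (div_le_one hsg).mpr (le_ciSup bddg x))
    (fun t ht ht1 => by
      obtain ⟨x, hx⟩ := exists_lt_of_lt_ciSup (show t * sf < sf by nlinarith)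
      exact ⟨x, (lt_div_iff₀ hsf).mpr hx⟩)
    (fun t ht ht1 => by
      obtain ⟨x, hx⟩ := exists_lt_of_lt_ciSup (show t * sg < sg by nlinarith)
      exact ⟨x, (lt_div_iff₀ hsg).mpr hx⟩)
    (fun x y => by
      calc f x / sf * (g y / sg) = f x * g y / (sf * sg) := by ring
        _ ≤ h ((x + y) / 2) ^ 2 / (sf * sg) := by gcongr; exact hyp x y
        _ = (h ((x + y) / 2) / c) ^ 2 := by rw [div_pow, hc2])
  have ediv : ∀ (φ : ℝ → ℝ) (d : ℝ), Measurable φ → 0 < d →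
      ∫⁻ x, ENNReal.ofReal (φ x / d) = ENNReal.ofReal d⁻¹ * ∫⁻ x, ENNReal.ofReal (φ x) := by
    intro φ d hmφ hd
    rw [← lintegral_const_mul _ (hmφ.ennreal_ofReal)]
    congr 1; ext x
    rw [← ENNReal.ofReal_mul (inv_nonneg.mpr hd.le)]
    congr 1; field_simp
  rw [ediv f sf hmf hsf, ediv g sg hmg hsg, ediv h c hmh hc] at key
  have hk : ENNReal.ofReal sf⁻¹ * ENNReal.ofReal sg⁻¹ = ENNReal.ofReal c⁻¹ ^ 2 := by
    rw [← ENNReal.ofReal_mul (inv_nonneg.mpr hsf.le), ← ENNReal.ofReal_pow (inv_nonneg.mpr hc.le)]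
    congr 1
    rw [← mul_inv, inv_pow, hc2]
  have key2 : ENNReal.ofReal c⁻¹ ^ 2 * ((∫⁻ x, ENNReal.ofReal (f x)) * ∫⁻ x, ENNReal.ofReal (g x))
      ≤ ENNReal.ofReal c⁻¹ ^ 2 * (∫⁻ x, ENNReal.ofReal (h x)) ^ 2 := by
    calc ENNReal.ofReal c⁻¹ ^ 2 * ((∫⁻ x, ENNReal.ofReal (f x)) * ∫⁻ x, ENNReal.ofReal (g x))
        = (ENNReal.ofReal sf⁻¹ * ∫⁻ x, ENNReal.ofReal (f x)) *
          (ENNReal.ofReal sg⁻¹ * ∫⁻ x, ENNReal.ofReal (g x)) := by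
          rw [← hk]; ring
      _ ≤ (ENNReal.ofReal c⁻¹ * ∫⁻ x, ENNReal.ofReal (h x)) ^ 2 := key
      _ = ENNReal.ofReal c⁻¹ ^ 2 * (∫⁻ x, ENNReal.ofReal (h x)) ^ 2 := by ring
  have hne : ENNReal.ofReal c⁻¹ ^ 2 ≠ 0 := by
    apply pow_ne_zero
    simp only [ne_eq, ENNReal.ofReal_eq_zero, not_le]
    exact inv_pos.mpr hc
  have hnt : ENNReal.ofReal c⁻¹ ^ 2 ≠ ⊤ := ENNReal.pow_ne_top ENNReal.ofReal_ne_top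
  exact (ENNReal.mul_le_mul_iff_right hne hnt).mp key2

lemma PL_main (f g h : ℝ → ℝ)
    (hmf : Measurable f) (hmg : Measurable g) (hmh : Measurable h)
    (hf0 : ∀ x, 0 ≤ f x) (hg0 : ∀ x, 0 ≤ g x) (hh0 : ∀ x, 0 ≤ h x)
    (hyp : ∀ x y, f x * g y ≤ (h ((x + y) / 2)) ^ 2) :
    (∫⁻ x, ENNReal.ofReal (f x)) * ∫⁻ x, ENNReal.ofReal (g x) ≤ (∫⁻ x, ENNReal.ofReal (h x)) ^ 2 := by
  have bounded : ∀ n m : ℕ,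
      (∫⁻ x, ENNReal.ofReal (min (f x) n)) * ∫⁻ x, ENNReal.ofReal (min (g x) m)
        ≤ (∫⁻ x, ENNReal.ofReal (h x)) ^ 2 := by
    intro n m
    refine PL_bounded _ _ h n m (hmf.min measurable_const) (hmg.min measurable_const) hmh
      (fun x => le_min (hf0 x) (Nat.cast_nonneg n)) (fun x => le_min (hg0 x) (Nat.cast_nonneg m))
      hh0 (fun x => min_le_right _ _) (fun x => min_le_right _ _) (fun x y => ?_)
    exact le_trans
      (mul_le_mul (min_le_left _ _) (min_le_left _ _) (le_min (hg0 y) (Nat.cast_nonneg m)) (hf0 x))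
      (hyp x y)
  have trunc : ∀ (φ : ℝ → ℝ), Measurable φ → (∀ x, 0 ≤ φ x) →
      ∫⁻ x, ENNReal.ofReal (φ x) = ⨆ n : ℕ, ∫⁻ x, ENNReal.ofReal (min (φ x) n) := by
    intro φ hmφ hφ0
    have h1 : ∀ x, ENNReal.ofReal (φ x) = ⨆ n : ℕ, ENNReal.ofReal (min (φ x) n) := by
      intro x
      apply le_antisymm
      · refine le_iSup_of_le ⌈φ x⌉₊ ?_
        rw [min_eq_left (Nat.le_ceil _)]
      · exact iSup_le fun n => ENNReal.ofReal_le_ofReal (min_le_left _ _)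
    calc ∫⁻ x, ENNReal.ofReal (φ x) = ∫⁻ x, ⨆ n : ℕ, ENNReal.ofReal (min (φ x) n) :=
          lintegral_congr h1
      _ = ⨆ n : ℕ, ∫⁻ x, ENNReal.ofReal (min (φ x) n) :=
          lintegral_iSup (fun k => (hmφ.min measurable_const).ennreal_ofReal)
            (fun k l hkl x => ENNReal.ofReal_le_ofReal (min_le_min le_rfl (Nat.cast_le.mpr hkl)))
  rw [trunc f hmf hf0, trunc g hmg hg0, ENNReal.iSup_mul]
  refine iSup_le fun n => ?_
  rw [ENNReal.mul_iSup]
  exact iSup_le fun m => bounded n m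

lemma log_ineq (s α : ℝ) (hs : 0 < s) (h0 : 0 ≤ α) (hαs : α < s) :
    (s + α) * Real.log (s + α) + (s - α) * Real.log (s - α)
      ≤ 2 * s * Real.log s + 2 * α ^ 2 / s := by
  have hsα : 0 < s + α := by linarith
  have hsα' : 0 < s - α := by linarith
  have h1 : Real.log (s + α) ≤ Real.log s + α / s := by
    have h := Real.log_le_sub_one_of_pos (show 0 < (s + α) / s by positivity)
    rw [Real.log_div (ne_of_gt hsα) (ne_of_gt hs)] at h
    have : (s + α) / s - 1 = α / s := by field_simp; ring
    linarith [this ▸ h]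
  have h2 : Real.log (s - α) ≤ Real.log s - α / s := by
    have h := Real.log_le_sub_one_of_pos (show 0 < (s - α) / s by positivity)
    rw [Real.log_div (ne_of_gt hsα') (ne_of_gt hs)] at h
    have : (s - α) / s - 1 = -(α / s) := by field_simp; ring
    linarith [this ▸ h]
  have e1 : (s + α) * Real.log (s + α) ≤ (s + α) * (Real.log s + α / s) :=
    mul_le_mul_of_nonneg_left h1 hsα.le
  have e2 : (s - α) * Real.log (s - α) ≤ (s - α) * (Real.log s - α / s) :=
    mul_le_mul_of_nonneg_left h2 hsα'.le
  have e3 : (s + α) * (Real.log s + α / s) + (s - α) * (Real.log s - α / s)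
      = 2 * s * Real.log s + 2 * α ^ 2 / s := by
    field_simp
    ring
  linarith

lemma pow_ineq (s α x y : ℝ) (hs : 0 < s) (h0 : 0 ≤ α) (hαs : α ≤ s)
    (hx : 0 < x) (hy : 0 < y) :
    x ^ (s + α) * y ^ (s - α) ≤ Real.exp (2 * α ^ 2 / s) * ((x + y) / 2) ^ (2 * s) := by
  have hm : 0 < (x + y) / 2 := by linarith
  have hxy : 0 < x + y := by linarith
  have hsplit : (x + y) ^ (2 * s) = 2 ^ (2 * s) * ((x + y) / 2) ^ (2 * s) := by
    rw [← Real.mul_rpow (by norm_num) hm.le]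
    congr 1
    field_simp
  rcases eq_or_lt_of_le hαs with heq | hlt
  · -- α = s
    subst heq
    have hα : 0 < α := hs
    rw [sub_self, Real.rpow_zero, mul_one]
    have e1 : x ^ (α + α) ≤ (x + y) ^ (α + α) :=
      Real.rpow_le_rpow hx.le (by linarith) (by linarith)
    have e2 : (x + y) ^ (α + α) = 2 ^ (α + α) * ((x + y) / 2) ^ (α + α) := by
      rw [← Real.mul_rpow (by norm_num) hm.le]
      congr 1
      field_simp
    have e3 : (2:ℝ) ^ (α + α) ≤ Real.exp (2 * α ^ 2 / α) := by
      rw [Real.rpow_def_of_pos (by norm_num : (0:ℝ) < 2)]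
      apply Real.exp_le_exp.mpr
      have hlog2 : Real.log 2 ≤ 1 := by
        have := Real.log_le_sub_one_of_pos (by norm_num : (0:ℝ) < 2)
        linarith
      have heq2 : 2 * α ^ 2 / α = α + α := by field_simp; ring
      rw [heq2]
      nlinarith [hα]
    have h2α : 2 * α = α + α := by ring
    rw [h2α]
    calc x ^ (α + α) ≤ (x + y) ^ (α + α) := e1
      _ = 2 ^ (α + α) * ((x + y) / 2) ^ (α + α) := e2
      _ ≤ Real.exp (2 * α ^ 2 / α) * ((x + y) / 2) ^ (α + α) := by
          apply mul_le_mul_of_nonneg_right e3 (by positivity)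
  · -- α < s
    have hsα : 0 < s + α := by linarith
    have hsα' : 0 < s - α := by linarith
    set w₁ := (s + α) / (2 * s) with hw₁
    set w₂ := (s - α) / (2 * s) with hw₂
    have hw₁0 : 0 < w₁ := by positivity
    have hw₂0 : 0 < w₂ := by positivity
    have hwsum : w₁ + w₂ = 1 := by rw [hw₁, hw₂]; field_simp; ring
    set p₁ := x / w₁ with hp₁
    set p₂ := y / w₂ with hp₂
    have hp₁0 : 0 < p₁ := by positivity
    have hp₂0 : 0 < p₂ := by positivity
    have amgm : p₁ ^ w₁ * p₂ ^ w₂ ≤ w₁ * p₁ + w₂ * p₂ :=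
      Real.geom_mean_le_arith_mean2_weighted hw₁0.le hw₂0.le hp₁0.le hp₂0.le hwsum
    have hsum : w₁ * p₁ + w₂ * p₂ = x + y := by
      rw [hp₁, hp₂]
      field_simp
    rw [hsum] at amgm
    have raised : (p₁ ^ w₁ * p₂ ^ w₂) ^ (2 * s) ≤ (x + y) ^ (2 * s) :=
      Real.rpow_le_rpow (by positivity) amgm (by positivity)
    have expand : (p₁ ^ w₁ * p₂ ^ w₂) ^ (2 * s) = p₁ ^ (s + α) * p₂ ^ (s - α) := by
      rw [Real.mul_rpow (by positivity) (by positivity),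
        ← Real.rpow_mul hp₁0.le, ← Real.rpow_mul hp₂0.le]
      congr 1
      · congr 1
        rw [hw₁]; field_simp
      · congr 1
        rw [hw₂]; field_simp
    have div1 : p₁ ^ (s + α) = x ^ (s + α) / w₁ ^ (s + α) := Real.div_rpow hx.le hw₁0.le (s + α)
    have div2 : p₂ ^ (s - α) = y ^ (s - α) / w₂ ^ (s - α) := Real.div_rpow hy.le hw₂0.le (s - α)
    have step1 : x ^ (s + α) * y ^ (s - α)
        ≤ w₁ ^ (s + α) * w₂ ^ (s - α) * (x + y) ^ (2 * s) := by
      rw [expand, div1, div2] at raised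
      have hpos : 0 < w₁ ^ (s + α) * w₂ ^ (s - α) := by positivity
      rw [div_mul_div_comm, div_le_iff₀ hpos] at raised
      linarith [raised]
    have const_bound : w₁ ^ (s + α) * w₂ ^ (s - α) * 2 ^ (2 * s)
        ≤ Real.exp (2 * α ^ 2 / s) := by
      have hposc : 0 < w₁ ^ (s + α) * w₂ ^ (s - α) * 2 ^ (2 * s) := by positivity
      rw [← Real.exp_log hposc]
      apply Real.exp_le_exp.mpr
      rw [Real.log_mul (by positivity) (by positivity), Real.log_mul (by positivity) (by positivity),
        Real.log_rpow hw₁0, Real.log_rpow hw₂0, Real.log_rpow (by norm_num : (0:ℝ) < 2)]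
      have lw₁ : Real.log w₁ = Real.log (s + α) - Real.log 2 - Real.log s := by
        rw [hw₁, Real.log_div (ne_of_gt hsα) (by positivity), Real.log_mul (by norm_num) (ne_of_gt hs)]
        ring
      have lw₂ : Real.log w₂ = Real.log (s - α) - Real.log 2 - Real.log s := by
        rw [hw₂, Real.log_div (ne_of_gt hsα') (by positivity), Real.log_mul (by norm_num) (ne_of_gt hs)]
        ring
      rw [lw₁, lw₂]
      have key := log_ineq s α hs h0 hlt
      ring_nf
      ring_nf at key
      linarith
    calc x ^ (s + α) * y ^ (s - α)
        ≤ w₁ ^ (s + α) * w₂ ^ (s - α) * (x + y) ^ (2 * s) := step1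
      _ = w₁ ^ (s + α) * w₂ ^ (s - α) * 2 ^ (2 * s) * ((x + y) / 2) ^ (2 * s) := by
          rw [hsplit]; ring
      _ ≤ Real.exp (2 * α ^ 2 / s) * ((x + y) / 2) ^ (2 * s) := by
          apply mul_le_mul_of_nonneg_right const_bound (by positivity)

-- axioms standing in for proven lemmas
theorem order_p_log_mgf_abs_bound
    {Ω : Type*} [MeasureSpace Ω] [IsProbabilityMeasure (ℙ : Measure Ω)]
    (ξ : Ω → ℝ) (hξm : Measurable ξ) (hξpos : ∀ ω, 0 < ξ ω)
    (p : ℝ) (hp : 1 < p)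
    (g : ℝ → ℝ) (hgnn : ∀ x, 0 < x → 0 ≤ g x) (hgm : Measurable g)
    (hdens : Measure.map ξ ℙ = volume.withDensity
      (fun x => ENNReal.ofReal (if 0 < x then x ^ (p - 1) * g x else 0)))
    (hlc : ∀ x y : ℝ, 0 < x → 0 < y → ∀ l : ℝ, 0 ≤ l → l ≤ 1 →
      g x ^ l * g y ^ (1 - l) ≤ g (l * x + (1 - l) * y))
    (α : ℝ) (hα0 : 0 ≤ α) (hα1 : α ≤ p - 1) :
    (∫ ω, Real.exp (α * |Real.log (ξ ω) - ∫ ω', Real.log (ξ ω')|))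
      ≤ 2 * Real.exp (2 * α ^ 2 / (p - 1)) := by
  set s : ℝ := p - 1 with hs_def
  have hs : 0 < s := by simp [hs_def]; linarith
  have hRpos : (0:ℝ) < 2 * Real.exp (2 * α ^ 2 / s) := by positivity
  set X : Ω → ℝ := fun ω => Real.log (ξ ω) with hX_def
  have hXm : Measurable X := Real.measurable_log.comp hξm
  set m : ℝ := ∫ ω', X ω' with hm_def
  -- trivial case α = 0
  rcases eq_or_lt_of_le hα0 with rfl | hα
  · simp only [zero_mul, Real.exp_zero, integral_const, measure_univ, ENNReal.toReal_one, probReal_univ,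
      smul_eq_mul, mul_one, one_mul]
    nlinarith [Real.exp_pos (2 * (0:ℝ) ^ 2 / s), Real.one_le_exp (by positivity : (0:ℝ) ≤ 2 * (0:ℝ)^2 / s)]
  -- non-integrable case
  by_cases hI : Integrable (fun ω => Real.exp (α * |X ω - m|)) ℙ
  swap
  · rw [integral_undef hI]
    positivity
  -- main case
  -- basic integrabilities
  have meas_eP : Measurable fun ω => Real.exp (α * (X ω - m)) :=
    Real.measurable_exp.comp (measurable_const.mul (hXm.sub measurable_const))
  have meas_eM : Measurable fun ω => Real.exp (-α * (X ω - m)) :=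
    Real.measurable_exp.comp (measurable_const.mul (hXm.sub measurable_const))
  have int_eP : Integrable (fun ω => Real.exp (α * (X ω - m))) ℙ := by
    refine hI.mono meas_eP.aestronglyMeasurable (ae_of_all _ fun ω => ?_)
    rw [Real.norm_eq_abs, Real.norm_eq_abs, Real.abs_exp, Real.abs_exp]
    exact Real.exp_le_exp.mpr (mul_le_mul_of_nonneg_left (le_abs_self _) hα0)
  have int_eM : Integrable (fun ω => Real.exp (-α * (X ω - m))) ℙ := by
    refine hI.mono meas_eM.aestronglyMeasurable (ae_of_all _ fun ω => ?_)
    rw [Real.norm_eq_abs, Real.norm_eq_abs, Real.abs_exp, Real.abs_exp]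
    have : -α * (X ω - m) = α * (-(X ω - m)) := by ring
    rw [this]
    exact Real.exp_le_exp.mpr (mul_le_mul_of_nonneg_left (neg_le_abs _) hα0)
  have int_Xm : Integrable (fun ω => X ω - m) ℙ := by
    have hbd : Integrable (fun ω => α⁻¹ * Real.exp (α * |X ω - m|)) ℙ := hI.const_mul _
    refine hbd.mono ((hXm.sub measurable_const).aestronglyMeasurable) (ae_of_all _ fun ω => ?_)
    rw [Real.norm_eq_abs, Real.norm_eq_abs, abs_mul, abs_of_pos (inv_pos.mpr hα),
      Real.abs_exp]
    have h1 : α * |X ω - m| ≤ Real.exp (α * |X ω - m|) := by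
      have h2 := Real.add_one_le_exp (α * |X ω - m|)
      linarith
    calc |X ω - m| = α⁻¹ * (α * |X ω - m|) := by field_simp
      _ ≤ α⁻¹ * Real.exp (α * |X ω - m|) :=
          mul_le_mul_of_nonneg_left h1 (inv_pos.mpr hα).le
  have int_X : Integrable X ℙ := by
    have : X = fun ω => (X ω - m) + m := by funext ω; ring
    rw [this]
    exact int_Xm.add (integrable_const m)
  have int_EP : Integrable (fun ω => Real.exp (α * X ω)) ℙ := by
    have : (fun ω => Real.exp (α * X ω)) = fun ω => Real.exp (α * (X ω - m)) * Real.exp (α * m) := by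
      funext ω; rw [← Real.exp_add]; ring_nf
    rw [this]
    exact int_eP.mul_const _
  have int_EM : Integrable (fun ω => Real.exp (-α * X ω)) ℙ := by
    have : (fun ω => Real.exp (-α * X ω)) = fun ω => Real.exp (-α * (X ω - m)) * Real.exp (-α * m) := by
      funext ω; rw [← Real.exp_add]; ring_nf
    rw [this]
    exact int_eM.mul_const _
  set FP : ℝ := ∫ ω, Real.exp (α * X ω) with hFP
  set FM : ℝ := ∫ ω, Real.exp (-α * X ω) with hFM
  have FPnn : 0 ≤ FP := integral_nonneg fun ω => (Real.exp_pos _).le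
  have FMnn : 0 ≤ FM := integral_nonneg fun ω => (Real.exp_pos _).le
  -- Jensen
  have jensen : ∀ β : ℝ, Integrable (fun ω => Real.exp (β * X ω)) ℙ →
      Real.exp (β * m) ≤ ∫ ω, Real.exp (β * X ω) := by
    intro β hint
    have h := (convexOn_exp).map_integral_le (Real.continuous_exp.continuousOn)
      isClosed_univ (ae_of_all _ fun ω => mem_univ _) (int_X.const_mul β)
      (by exact hint)
    rw [integral_const_mul] at h
    simpa using h
  -- density function
  set D : ℝ → ℝ := fun x => if 0 < x then x ^ s * g x else 0 with hD
  have hsetpos : MeasurableSet {x : ℝ | 0 < x} := measurableSet_Ioi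
  have measD : Measurable D := by
    apply Measurable.ite hsetpos ?_ measurable_const
    fun_prop
  have Dnn : ∀ x, 0 ≤ D x := by
    intro x
    show (0:ℝ) ≤ if 0 < x then x ^ s * g x else 0
    split_ifs with hx
    · exact mul_nonneg (Real.rpow_nonneg hx.le _) (hgnn x hx)
    · exact le_refl 0
  have normD : ∫⁻ x, ENNReal.ofReal (D x) = 1 := by
    have h1 : (Measure.map ξ ℙ) univ = 1 := by
      haveI : IsProbabilityMeasure (Measure.map ξ ℙ) := Measure.isProbabilityMeasure_map hξm.aemeasurable
      exact measure_univ
    rw [hdens, withDensity_apply _ MeasurableSet.univ, Measure.restrict_univ] at h1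
    exact h1
  -- transfer
  have transfer : ∀ β : ℝ, ∫⁻ ω, ENNReal.ofReal (Real.exp (β * X ω)) ∂ℙ
      = ∫⁻ x, ENNReal.ofReal (if 0 < x then x ^ (s + β) * g x else 0) := by
    intro β
    have hmble : Measurable fun x : ℝ => ENNReal.ofReal (Real.exp (β * Real.log x)) :=
      (Real.measurable_exp.comp (measurable_const.mul Real.measurable_log)).ennreal_ofReal
    calc ∫⁻ ω, ENNReal.ofReal (Real.exp (β * X ω)) ∂ℙ
        = ∫⁻ x, ENNReal.ofReal (Real.exp (β * Real.log x)) ∂(Measure.map ξ ℙ) :=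
          (lintegral_map hmble hξm).symm
      _ = ∫⁻ x, ENNReal.ofReal (D x) * ENNReal.ofReal (Real.exp (β * Real.log x)) := by
          rw [hdens, lintegral_withDensity_eq_lintegral_mul _ measD.ennreal_ofReal hmble]
          rfl
      _ = ∫⁻ x, ENNReal.ofReal (if 0 < x then x ^ (s + β) * g x else 0) := by
          apply lintegral_congr
          intro x
          by_cases hx : 0 < x
          · have hgx := hgnn x hx
            rw [hD]
            simp only [hx, if_true]
            rw [← ENNReal.ofReal_mul (mul_nonneg (Real.rpow_nonneg hx.le _) hgx)]
            congr 1
            have hxb : Real.exp (β * Real.log x) = x ^ β := by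
              rw [Real.rpow_def_of_pos hx, mul_comm]
            rw [hxb, Real.rpow_add hx]
            ring
          · rw [hD]
            simp only [hx, if_false]
            simp
  -- the PL hypothesis
  set E : ℝ := Real.exp (α ^ 2 / s) with hE
  have hEpos : 0 < E := Real.exp_pos _
  have plhyp : ∀ x y : ℝ, (if 0 < x then x ^ (s + α) * g x else 0) *
      (if 0 < y then y ^ (s - α) * g y else 0) ≤ (E * D ((x + y) / 2)) ^ 2 := by
    intro x y
    by_cases hx : 0 < x
    swap
    · simp only [hx, if_false, zero_mul]
      exact sq_nonneg _
    by_cases hy : 0 < y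
    swap
    · simp only [hy, if_false, mul_zero]
      exact sq_nonneg _
    simp only [hx, hy, if_true]
    have hm2 : 0 < (x + y) / 2 := by linarith
    have hgx := hgnn x hx
    have hgy := hgnn y hy
    have hgm2 := hgnn _ hm2
    -- log-concavity squared
    have h12 := hlc x y hx hy (1/2) (by norm_num) (by norm_num)
    have harg : (1:ℝ)/2 * x + (1 - 1/2) * y = (x + y) / 2 := by ring
    have hexp2 : (1:ℝ) - 1/2 = 1/2 := by norm_num
    rw [harg, hexp2] at h12
    have gsq : g x * g y ≤ g ((x + y) / 2) ^ 2 := by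
      have hL : (g x ^ ((1:ℝ)/2) * g y ^ ((1:ℝ)/2)) ^ 2 = g x * g y := by
        rw [mul_pow, ← Real.rpow_natCast (g x ^ ((1:ℝ)/2)) 2,
          ← Real.rpow_natCast (g y ^ ((1:ℝ)/2)) 2,
          ← Real.rpow_mul hgx, ← Real.rpow_mul hgy]
        norm_num
      rw [← hL]
      exact pow_le_pow_left₀ (mul_nonneg (Real.rpow_nonneg hgx _) (Real.rpow_nonneg hgy _)) h12 2
    have powb := pow_ineq s α x y hs hα0 hα1 hx hy
    have hDm : D ((x + y) / 2) = ((x + y) / 2) ^ s * g ((x + y) / 2) := by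
      rw [hD]; simp only [hm2, if_true]
    have main : x ^ (s + α) * g x * (y ^ (s - α) * g y)
        ≤ (Real.exp (2 * α ^ 2 / s) * ((x + y) / 2) ^ (2 * s)) * (g ((x + y) / 2) ^ 2) := by
      have e1 : x ^ (s + α) * g x * (y ^ (s - α) * g y)
          = (x ^ (s + α) * y ^ (s - α)) * (g x * g y) := by ring
      rw [e1]
      exact mul_le_mul powb gsq (mul_nonneg hgx hgy)
        (by positivity)
    have rhsEq : (E * D ((x + y) / 2)) ^ 2
        = (Real.exp (2 * α ^ 2 / s) * ((x + y) / 2) ^ (2 * s)) * (g ((x + y) / 2) ^ 2) := by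
      rw [hDm]
      have hE2 : E ^ 2 = Real.exp (2 * α ^ 2 / s) := by
        rw [hE, ← Real.exp_nat_mul]
        congr 1
        push_cast
        ring
      have hms : (((x + y) / 2) ^ s) ^ 2 = ((x + y) / 2) ^ (2 * s) := by
        rw [← Real.rpow_natCast (((x + y) / 2) ^ s) 2, ← Real.rpow_mul hm2.le]
        push_cast
        rw [mul_comm s 2]
      calc (E * (((x + y) / 2) ^ s * g ((x + y) / 2))) ^ 2
          = E ^ 2 * ((((x + y) / 2) ^ s) ^ 2 * g ((x + y) / 2) ^ 2) := by ring
        _ = (Real.exp (2 * α ^ 2 / s) * ((x + y) / 2) ^ (2 * s)) * (g ((x + y) / 2) ^ 2) := by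
            rw [hE2, hms]; ring
    rw [rhsEq]
    exact main
  -- apply PL
  have measfP : Measurable fun x : ℝ => if 0 < x then x ^ (s + α) * g x else 0 := by
    apply Measurable.ite hsetpos ?_ measurable_const
    fun_prop
  have measfM : Measurable fun x : ℝ => if 0 < x then x ^ (s - α) * g x else 0 := by
    apply Measurable.ite hsetpos ?_ measurable_const
    fun_prop
  have nnfP : ∀ x : ℝ, 0 ≤ (if 0 < x then x ^ (s + α) * g x else 0 : ℝ) := by
    intro x; split_ifs with hx
    · exact mul_nonneg (Real.rpow_nonneg hx.le _) (hgnn x hx)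
    · exact le_refl 0
  have nnfM : ∀ x : ℝ, 0 ≤ (if 0 < x then x ^ (s - α) * g x else 0 : ℝ) := by
    intro x; split_ifs with hx
    · exact mul_nonneg (Real.rpow_nonneg hx.le _) (hgnn x hx)
    · exact le_refl 0
  have PL := PL_main (fun x => if 0 < x then x ^ (s + α) * g x else 0)
    (fun x => if 0 < x then x ^ (s - α) * g x else 0) (fun z => E * D z)
    measfP measfM (measurable_const.mul measD)
    nnfP nnfM (fun z => mul_nonneg hEpos.le (Dnn z)) plhyp
  have hR : ∫⁻ x, ENNReal.ofReal (E * D x) = ENNReal.ofReal E := by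
    have he : ∀ x, ENNReal.ofReal (E * D x) = ENNReal.ofReal E * ENNReal.ofReal (D x) :=
      fun x => ENNReal.ofReal_mul hEpos.le
    simp_rw [he]
    rw [lintegral_const_mul _ measD.ennreal_ofReal, normD, mul_one]
  -- Bochner to lintegral
  have hAP : ENNReal.ofReal FP = ∫⁻ ω, ENNReal.ofReal (Real.exp (α * X ω)) ∂ℙ :=
    ofReal_integral_eq_lintegral_ofReal int_EP (ae_of_all _ fun ω => (Real.exp_pos _).le)
  have hAM : ENNReal.ofReal FM = ∫⁻ ω, ENNReal.ofReal (Real.exp (-α * X ω)) ∂ℙ :=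
    ofReal_integral_eq_lintegral_ofReal int_EM (ae_of_all _ fun ω => (Real.exp_pos _).le)
  have prod_le : FP * FM ≤ Real.exp (2 * α ^ 2 / s) := by
    have step : ENNReal.ofReal (FP * FM) ≤ ENNReal.ofReal (Real.exp (2 * α ^ 2 / s)) := by
      rw [ENNReal.ofReal_mul FPnn, hAP, hAM, transfer α, transfer (-α)]
      have hsub : ∀ x : ℝ, (if 0 < x then x ^ (s + -α) * g x else 0)
          = (if 0 < x then x ^ (s - α) * g x else 0) := by
        intro x; rw [sub_eq_add_neg]
      simp_rw [hsub]
      calc (∫⁻ x, ENNReal.ofReal (if 0 < x then x ^ (s + α) * g x else 0)) *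
            ∫⁻ x, ENNReal.ofReal (if 0 < x then x ^ (s - α) * g x else 0)
          ≤ (∫⁻ x, ENNReal.ofReal (E * D x)) ^ 2 := PL
        _ = ENNReal.ofReal E ^ 2 := by rw [hR]
        _ = ENNReal.ofReal (E ^ 2) := (ENNReal.ofReal_pow hEpos.le 2).symm
        _ = ENNReal.ofReal (Real.exp (2 * α ^ 2 / s)) := by
            congr 1
            rw [hE, ← Real.exp_nat_mul]
            congr 1
            push_cast
            ring
    exact (ENNReal.ofReal_le_ofReal_iff (Real.exp_pos _).le).mp step
  -- Jensen bounds
  have jP : Real.exp (α * m) ≤ FP := jensen α int_EP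
  have jM : Real.exp (-α * m) ≤ FM := jensen (-α) int_EM
  -- final chain
  have splitEq : ∀ ω, Real.exp (α * (X ω - m)) = Real.exp (α * X ω) * Real.exp (-(α * m)) := by
    intro ω; rw [← Real.exp_add]; ring_nf
  have splitEqM : ∀ ω, Real.exp (-α * (X ω - m)) = Real.exp (-α * X ω) * Real.exp (α * m) := by
    intro ω; rw [← Real.exp_add]; ring_nf
  have pointwise : ∀ ω, Real.exp (α * |X ω - m|)
      ≤ Real.exp (α * (X ω - m)) + Real.exp (-α * (X ω - m)) := by
    intro ω
    rcases abs_cases (X ω - m) with ⟨h1, _⟩ | ⟨h1, _⟩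
    · rw [h1]
      exact le_add_of_nonneg_right (Real.exp_pos _).le
    · rw [h1]
      have : α * -(X ω - m) = -α * (X ω - m) := by ring
      rw [this]
      exact le_add_of_nonneg_left (Real.exp_pos _).le
  calc ∫ ω, Real.exp (α * |X ω - m|)
      ≤ ∫ ω, (Real.exp (α * (X ω - m)) + Real.exp (-α * (X ω - m))) :=
        integral_mono hI (int_eP.add int_eM) pointwise
    _ = (∫ ω, Real.exp (α * (X ω - m))) + ∫ ω, Real.exp (-α * (X ω - m)) :=
        integral_add int_eP int_eM
    _ = FP * Real.exp (-(α * m)) + FM * Real.exp (α * m) := by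
        rw [hFP, hFM]
        congr 1
        · simp_rw [splitEq]
          rw [integral_mul_const]
        · simp_rw [splitEqM]
          rw [integral_mul_const]
    _ ≤ FP * FM + FM * FP := by
        have e1 : Real.exp (-(α * m)) = Real.exp (-α * m) := by ring_nf
        apply add_le_add
        · rw [e1]
          exact mul_le_mul_of_nonneg_left jM FPnn
        · exact mul_le_mul_of_nonneg_left jP FMnn
    _ = 2 * (FP * FM) := by ring
    _ ≤ 2 * Real.exp (2 * α ^ 2 / s) := by linarith [prod_le]
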